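/- A (d+1)-tuple of closed half-spaces (H₁, …, H_{d+1}) in ℝ^d with 0 ∈ ∂Hᵢ for all i satisfies ⋂ᵢ Hᵢ = {0} if and only if ℝ^d \ {0} = ⋃ᵢ relint Hᵢ, where relint Hᵢ denotes the open half-space corresponding to Hᵢ. -/

import Mathlib

theorem stmt2 (d : ℕ) (n : Fin (d + 1) → EuclideanSpace ℝ (Fin d))
    (hunit : ∀ i, ‖n i‖ = 1) :
    (⋂ i, {x : EuclideanSpace ℝ (Fin d) | (inner ℝ (n i) x : ℝ) ≤ 0}) = {0} ↔
      ({0}ᶜ : Set (EuclideanSpace ℝ (Fin d))) =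
        ⋃ i, {x : EuclideanSpace ℝ (Fin d) | (inner ℝ (n i) x : ℝ) < 0} := by
  constructor
  · intro h
    ext x
    simp only [Set.mem_compl_iff, Set.mem_singleton_iff, Set.mem_iUnion, Set.mem_setOf_eq]
    constructor
    · intro hx
      by_contra hc
      push_neg at hc
      have hmem : -x ∈ (⋂ i, {x : EuclideanSpace ℝ (Fin d) | (inner ℝ (n i) x : ℝ) ≤ 0}) := by
        simp only [Set.mem_iInter, Set.mem_setOf_eq, inner_neg_right]
        intro i
        linarith [hc i]
      rw [h] at hmem
      exact hx (by simpa [neg_eq_zero] using hmem)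
    · rintro ⟨i, hi⟩ h0
      rw [h0] at hi
      simp at hi
  · intro h
    ext x
    simp only [Set.mem_iInter, Set.mem_setOf_eq, Set.mem_singleton_iff]
    constructor
    · intro hx
      by_contra h0
      have hnx : -x ∈ ({0}ᶜ : Set (EuclideanSpace ℝ (Fin d))) := by simpa using h0
      rw [h] at hnx
      obtain ⟨i, hi⟩ := Set.mem_iUnion.mp hnx
      simp only [Set.mem_setOf_eq, inner_neg_right] at hi
      linarith [hx i]
    · intro hx i
      rw [hx]
      simp
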